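/- If p ∈ R_1 with p(θ_0) = 0 and p(θ_1) = 1 and θ_0, θ_1 satisfy |θ_0 - θ_1| = π/2 (with θ_0 = 0, θ_1 = π/2), then p is uniquely determined: p(θ) = sin²θ. -/

import Mathlib

open Real

/-- `p` is a real trigonometric polynomial of degree at most 2. -/
def IsTrigPoly2 (p : ℝ → ℝ) : Prop :=
  ∃ c0 c1 s1 c2 s2 : ℝ, ∀ θ : ℝ,
    p θ = c0 + c1 * Real.cos θ + s1 * Real.sin θ
      + c2 * Real.cos (2 * θ) + s2 * Real.sin (2 * θ)

/-- If `p ∈ R₁` satisfies `p(0) = 0` and `p(π/2) = 1`, then `p` is uniquely determined: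
`p(θ) = sin²θ`. -/
theorem stmt11 (p : ℝ → ℝ) (hp : IsTrigPoly2 p)
    (hb : ∀ θ : ℝ, p θ ∈ Set.Icc (0 : ℝ) 1)
    (h0 : p 0 = 0) (h1 : p (Real.pi / 2) = 1) :
    ∀ θ : ℝ, p θ = Real.sin θ ^ 2 := by
  obtain ⟨c0, c1, s1, c2, s2, hf⟩ := hp
  have hpf : p = fun θ => c0 + c1 * Real.cos θ + s1 * Real.sin θ
      + c2 * Real.cos (2 * θ) + s2 * Real.sin (2 * θ) := funext hf
  -- derivative of p at every point
  have hd : ∀ θ : ℝ, HasDerivAt p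
      (c1 * (-Real.sin θ) + s1 * Real.cos θ + c2 * (-Real.sin (2 * θ) * 2)
        + s2 * (Real.cos (2 * θ) * 2)) θ := by
    intro θ
    rw [hpf]
    have hθ : HasDerivAt (fun θ : ℝ => 2 * θ) 2 θ := by
      simpa using (hasDerivAt_id θ).const_mul 2
    have h1 := (Real.hasDerivAt_cos θ).const_mul c1
    have h2 := (Real.hasDerivAt_sin θ).const_mul s1
    have h3 := ((Real.hasDerivAt_cos (2 * θ)).comp θ hθ).const_mul c2
    have h4 := ((Real.hasDerivAt_sin (2 * θ)).comp θ hθ).const_mul s2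
    have := (((((hasDerivAt_const θ c0).add h1).add h2).add h3).add h4)
    exact this.congr_deriv (by ring)
  -- derivative vanishes at 0 (global min)
  have hmin : IsLocalMin p 0 := by
    apply Filter.Eventually.of_forall
    intro x
    rw [h0]
    exact (hb x).1
  have hmax : IsLocalMax p (Real.pi / 2) := by
    apply Filter.Eventually.of_forall
    intro x
    rw [h1]
    exact (hb x).2
  have hd0 : s1 + 2 * s2 = 0 := by
    have := hmin.deriv_eq_zero
    rw [(hd 0).deriv] at this
    simp at this
    linarith
  have hd1 : c1 + 2 * s2 = 0 := by
    have := hmax.deriv_eq_zero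
    rw [(hd (Real.pi / 2)).deriv] at this
    have hc : Real.cos (2 * (Real.pi / 2)) = -1 := by
      rw [show (2 : ℝ) * (Real.pi / 2) = Real.pi by ring, Real.cos_pi]
    have hs : Real.sin (2 * (Real.pi / 2)) = 0 := by
      rw [show (2 : ℝ) * (Real.pi / 2) = Real.pi by ring, Real.sin_pi]
    rw [hc, hs, Real.sin_pi_div_two, Real.cos_pi_div_two] at this
    linarith
  -- point evaluations
  have e0 : c0 + c1 + c2 = 0 := by
    have := hf 0
    rw [h0] at this; simp at this; linarith
  have e1 : c0 + s1 - c2 = 1 := by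
    have := hf (Real.pi / 2)
    rw [h1, Real.sin_pi_div_two, Real.cos_pi_div_two,
      show (2 : ℝ) * (Real.pi / 2) = Real.pi by ring, Real.cos_pi, Real.sin_pi] at this
    linarith
  have e2 : 0 ≤ c0 - c1 + c2 := by
    have hh := (hb Real.pi).1
    rw [hf Real.pi, Real.sin_pi, Real.cos_pi,
      show (2 : ℝ) * Real.pi = 2 * Real.pi by ring, Real.cos_two_pi, Real.sin_two_pi] at hh
    linarith
  have e3 : c0 - s1 - c2 ≤ 1 := by
    have hh := (hb (-(Real.pi / 2))).2
    rw [hf (-(Real.pi / 2)), Real.sin_neg, Real.cos_neg, Real.sin_pi_div_two,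
      Real.cos_pi_div_two,
      show (2 : ℝ) * -(Real.pi / 2) = -Real.pi by ring, Real.cos_neg, Real.sin_neg,
      Real.cos_pi, Real.sin_pi] at hh
    linarith
  -- solve: c1 = s1 = s2 = 0, c0 = 1/2, c2 = -1/2
  have hc1 : c1 = 0 := by linarith
  have hs1 : s1 = 0 := by linarith
  have hs2 : s2 = 0 := by linarith
  have hc0 : c0 = 1 / 2 := by linarith
  have hc2 : c2 = -(1 / 2) := by linarith
  intro θ
  rw [hf θ, hc0, hc1, hs1, hs2, hc2, Real.cos_two_mul]
  have := Real.sin_sq_add_cos_sq θ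
  nlinarith [this]
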